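/- arXiv:2309.06026 — 2 statements merged into one kernel-verified Lean document; each statement's English description precedes it below -/
import Mathlib

section
/- Let $1/2 < \gamma_2 < \gamma_1 < 1$. Define $A_1 = \gamma_1^3(\gamma_1-1)^2$, $B_1 = \gamma_1(\gamma_1-1)\gamma_2(\gamma_2-1)(\gamma_1+\gamma_2)$, and $C_1 = \gamma_2^3(\gamma_2-1)^2$. Then $B_1^2 - 4A_1C_1 > 0$. -/
theorem stmt_3 (γ1 γ2 : ℝ) (h1 : 1/2 < γ2) (h2 : γ2 < γ1) (h3 : γ1 < 1) :
    (γ1 * (γ1 - 1) * γ2 * (γ2 - 1) * (γ1 + γ2)) ^ 2 -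
      4 * (γ1 ^ 3 * (γ1 - 1) ^ 2) * (γ2 ^ 3 * (γ2 - 1) ^ 2) > 0 := by
  have key : (γ1 * (γ1 - 1) * γ2 * (γ2 - 1) * (γ1 + γ2)) ^ 2 -
      4 * (γ1 ^ 3 * (γ1 - 1) ^ 2) * (γ2 ^ 3 * (γ2 - 1) ^ 2)
      = (γ1 * (γ1 - 1) * γ2 * (γ2 - 1)) ^ 2 * (γ1 - γ2) ^ 2 := by ring
  rw [key]
  have hγ2 : 0 < γ2 := by linarith
  have hγ1 : 0 < γ1 := by linarith
  have h4 : γ1 - 1 < 0 := by linarith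
  have h5 : γ2 - 1 < 0 := by linarith
  have hb : 0 < γ1 * (γ1 - 1) * γ2 * (γ2 - 1) := by
    have := mul_pos (mul_pos hγ1 hγ2) (mul_pos_of_neg_of_neg h4 h5)
    nlinarith [this]
  exact mul_pos (pow_pos hb 2) (pow_pos (by linarith : (0:ℝ) < γ1 - γ2) 2)
end

section
/- For every real number $H > 1$ and every real $\theta$, $\left|\psi(\theta) + \sum_{0 < |h| \le H} \frac{e(\theta h)}{2\pi i h}\right| \ll \min\left(1, \frac{1}{H \|\theta\|}\right)$, where the implied constant is absolute. -/
noncomputable def e (x : ℝ) : ℂ := Complex.exp (2 * Real.pi * Complex.I * x)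

/-- distance from `t` to the nearest integer -/
noncomputable def nint (t : ℝ) : ℝ := |t - round t|

open Real Finset

noncomputable def S (N : ℤ) (θ : ℝ) : ℝ :=
  ∑ h ∈ Finset.Icc (1:ℤ) N, Real.sin (2*π*θ*h) / (π*h)

lemma e_sub_e (a : ℝ) : e a - e (-a) = 2 * Complex.I * (Real.sin (2*π*a) : ℂ) := by
  rw [e, e, Complex.ofReal_sin, Complex.sin]
  have h1 : 2 * (π:ℂ) * Complex.I * (a:ℂ) = ((2*π*a : ℝ):ℂ) * Complex.I := by push_cast; ring
  have h2 : 2 * (π:ℂ) * Complex.I * ((-a:ℝ):ℂ) = -((2*π*a : ℝ):ℂ) * Complex.I := by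
    push_cast; ring
  rw [h1, h2]
  have hI := Complex.I_mul_I
  set E1 := Complex.exp (((2*π*a : ℝ):ℂ) * Complex.I)
  set E2 := Complex.exp (-((2*π*a : ℝ):ℂ) * Complex.I)
  field_simp
  linear_combination (E1 - E2) * Complex.I_sq

lemma pair_term (h : ℝ) (hh : h ≠ 0) (a : ℝ) :
    e a / (2*π*Complex.I*(h:ℂ)) + e (-a) / (2*π*Complex.I*(-(h:ℂ)))
      = ((Real.sin (2*π*a) : ℝ):ℂ) / ((π:ℂ)*(h:ℂ)) := by
  have hh' : (h:ℂ) ≠ 0 := by exact_mod_cast hh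
  have hc : 2*(π:ℂ)*Complex.I*(h:ℂ) ≠ 0 := by
    simp [Real.pi_ne_zero, Complex.I_ne_zero, hh']
  have hc2 : (π:ℂ)*(h:ℂ) ≠ 0 := by simp [Real.pi_ne_zero, hh']
  rw [mul_neg, div_neg, ← sub_eq_add_neg, div_sub_div_same, e_sub_e,
    div_eq_div_iff hc hc2]
  ring

lemma sum_pair (N : ℤ) (θ : ℝ) :
    ∑ h ∈ (Finset.Icc (-N) N).erase 0, e (θ * h) / (2 * π * Complex.I * h)
      = ((S N θ : ℝ) : ℂ) := by
  have hset : (Finset.Icc (-N) N).erase 0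
      = (Finset.Icc 1 N) ∪ (Finset.Icc 1 N).image (fun h => -h) := by
    ext h
    simp only [Finset.mem_erase, Finset.mem_Icc, Finset.mem_union, Finset.mem_image]
    constructor
    · rintro ⟨h0, h1, h2⟩
      rcases le_or_gt 1 h with hh | hh
      · exact Or.inl ⟨hh, h2⟩
      · exact Or.inr ⟨-h, ⟨by omega, by omega⟩, by omega⟩
    · rintro (⟨h1, h2⟩ | ⟨a, ⟨a1, a2⟩, rfl⟩) <;> omega
  have hdisj : Disjoint (Finset.Icc (1:ℤ) N) ((Finset.Icc (1:ℤ) N).image (fun h => -h)) := by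
    rw [Finset.disjoint_left]
    intro a ha hb
    simp only [Finset.mem_Icc] at ha
    simp only [Finset.mem_image, Finset.mem_Icc] at hb
    obtain ⟨b, hb1, hb2⟩ := hb
    omega
  rw [hset, Finset.sum_union hdisj,
    Finset.sum_image (by intro x _ y _ h; omega : ∀ x ∈ Finset.Icc (1:ℤ) N, ∀ y ∈ Finset.Icc (1:ℤ) N, -x = -y → x = y),
    ← Finset.sum_add_distrib, S]
  push_cast
  apply Finset.sum_congr rfl
  intro h hh
  simp only [Finset.mem_Icc] at hh
  have hh0 : (h:ℝ) ≠ 0 := by exact_mod_cast (by omega : h ≠ 0)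
  have := pair_term ((h:ℤ):ℝ) hh0 (θ * h)
  push_cast at this ⊢
  convert this using 2 <;> push_cast <;> ring

noncomputable def G (N : ℤ) (t : ℝ) : ℝ := t - 1/2 + S N t

lemma hasDerivAt_G (N : ℤ) (t : ℝ) :
    HasDerivAt (G N) (1 + ∑ h ∈ Finset.Icc (1:ℤ) N, 2 * Real.cos (2*π*t*h)) t := by
  have h1 : HasDerivAt (fun t : ℝ => t - 1/2) 1 t := by
    simpa using (hasDerivAt_id t).sub_const (1/2)
  have h2 : HasDerivAt (fun θ => S N θ) (∑ h ∈ Finset.Icc (1:ℤ) N, 2 * Real.cos (2*π*t*h)) t := by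
    unfold S
    apply HasDerivAt.fun_sum
    intro h hh
    simp only [Finset.mem_Icc] at hh
    have hh0 : (h:ℝ) ≠ 0 := by exact_mod_cast (by omega : h ≠ 0)
    have inner : HasDerivAt (fun t : ℝ => 2*π*t*(h:ℝ)) (2*π*(h:ℝ)) t := by
      simpa using ((hasDerivAt_id t).const_mul (2*π)).mul_const (h:ℝ)
    have := ((Real.hasDerivAt_sin (2*π*t*h)).comp t inner).div_const (π*h)
    refine this.congr_deriv ?_
    field_simp
  exact h1.add h2

lemma dirichlet (N : ℤ) (hN : 0 ≤ N) (t : ℝ) (ht : Real.sin (π*t) ≠ 0) :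
    1 + ∑ h ∈ Finset.Icc (1:ℤ) N, 2 * Real.cos (2*π*t*h)
      = Real.sin ((2*(N:ℝ)+1)*(π*t)) / Real.sin (π*t) := by
  refine Int.le_induction (motive := fun n _ => 1 + ∑ h ∈ Finset.Icc (1:ℤ) n, 2 * Real.cos (2*π*t*h)
      = Real.sin ((2*(n:ℝ)+1)*(π*t)) / Real.sin (π*t)) ?_ (fun N hN ih => ?_) N hN
  · rw [Finset.Icc_eq_empty (by omega), Finset.sum_empty, add_zero,
      show (2*((0:ℤ):ℝ)+1)*(π*t) = π*t by push_cast; ring, div_self ht]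
  · have hins : Finset.Icc (1:ℤ) (N+1) = insert (N+1) (Finset.Icc 1 N) := by
      ext x
      simp only [Finset.mem_Icc, Finset.mem_insert]
      omega
    rw [hins, Finset.sum_insert (by simp only [Finset.mem_Icc]; omega)]
    have key : ∀ A B : ℝ, Real.sin (A + 2*B) = Real.sin A + 2 * Real.cos (A+B) * Real.sin B := by
      intro A B
      have h1 : A + 2*B = (A+B) + B := by ring
      have h2 : Real.sin A = Real.sin ((A+B) - B) := by ring_nf
      rw [h1, Real.sin_add, h2, Real.sin_sub]
      ring
    have harg : (2*((N+1:ℤ):ℝ)+1)*(π*t) = (2*(N:ℝ)+1)*(π*t) + 2*(π*t) := by push_cast; ring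
    rw [show (1:ℝ) + (2 * Real.cos (2*π*t*((N+1:ℤ):ℝ)) + ∑ h ∈ Finset.Icc (1:ℤ) N,
        2 * Real.cos (2*π*t*h)) = (1 + ∑ h ∈ Finset.Icc (1:ℤ) N, 2 * Real.cos (2*π*t*h))
        + 2 * Real.cos (2*π*t*((N+1:ℤ):ℝ)) from by ring, ih, harg,
      key ((2*(N:ℝ)+1)*(π*t)) (π*t)]
    rw [show (2*(N:ℝ)+1)*(π*t) + π*t = 2*π*t*((N+1:ℤ):ℝ) from by push_cast; ring]
    field_simp

lemma G_half (N : ℤ) : G N (1/2) = 0 := by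
  unfold G S
  rw [Finset.sum_eq_zero, add_zero]
  · norm_num
  · intro h hh
    rw [show 2*π*(1/2:ℝ)*(h:ℝ) = ((h:ℤ):ℝ)*π from by push_cast; ring,
      Real.sin_int_mul_pi, zero_div]

lemma G_bound (N : ℤ) (hN : 1 ≤ N) {x : ℝ} (hx0 : 0 < x) (hx : x ≤ 1/2) :
    |G N x| ≤ 1 / ((2*(N:ℝ)+1)*π*x) := by
  set c : ℝ := (2*(N:ℝ)+1)*π with hc
  have hNR : (1:ℝ) ≤ (N:ℝ) := by exact_mod_cast hN
  have hcpos : 0 < c := by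
    have := Real.pi_pos
    rw [hc]; nlinarith
  have hsin : ∀ t ∈ Set.Icc x (1/2:ℝ), 0 < Real.sin (π*t) := by
    intro t ht
    apply Real.sin_pos_of_pos_of_lt_pi
    · have := Real.pi_pos; nlinarith [ht.1]
    · have := Real.pi_pos; nlinarith [ht.2]
  have huIcc : Set.uIcc x (1/2:ℝ) = Set.Icc x (1/2:ℝ) := Set.uIcc_of_le (by linarith)
  set u : ℝ → ℝ := fun t => (Real.sin (π*t))⁻¹ with hu_def
  set u' : ℝ → ℝ := fun t => -(Real.cos (π*t)*π)/(Real.sin (π*t))^2 with hu'_def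
  set v : ℝ → ℝ := fun t => -Real.cos (c*t)/c with hv_def
  set v' : ℝ → ℝ := fun t => Real.sin (c*t) with hv'_def
  have hu : ∀ t ∈ Set.Icc x (1/2:ℝ), HasDerivAt u (u' t) t := by
    intro t ht
    have inner : HasDerivAt (fun t : ℝ => Real.sin (π*t)) (Real.cos (π*t)*π) t :=
      (Real.hasDerivAt_sin (π*t)).comp t (by simpa using (hasDerivAt_id t).const_mul π)
    exact inner.inv (ne_of_gt (hsin t ht))
  have hv : ∀ t : ℝ, HasDerivAt v (v' t) t := by
    intro t
    have inner : HasDerivAt (fun t : ℝ => c*t) c t := by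
      simpa using (hasDerivAt_id t).const_mul c
    have := (((Real.hasDerivAt_cos (c*t)).comp t inner).neg).div_const c
    refine this.congr_deriv ?_
    rw [hv'_def]
    field_simp
  have hcontu' : ContinuousOn u' (Set.Icc x (1/2:ℝ)) := by
    apply ContinuousOn.div
    · fun_prop
    · fun_prop
    · intro t ht
      exact pow_ne_zero _ (ne_of_gt (hsin t ht))
  have hcontu : ContinuousOn u (Set.Icc x (1/2:ℝ)) := by
    apply ContinuousOn.inv₀
    · fun_prop
    · intro t ht; exact ne_of_gt (hsin t ht)
  have hIu' : IntervalIntegrable u' MeasureTheory.volume x (1/2) := by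
    apply ContinuousOn.intervalIntegrable
    rwa [huIcc]
  have hIv' : IntervalIntegrable v' MeasureTheory.volume x (1/2) :=
    (Continuous.intervalIntegrable (by fun_prop) _ _)
  -- FTC for G
  have hK : IntervalIntegrable (fun t => 1 + ∑ h ∈ Finset.Icc (1:ℤ) N,
      2 * Real.cos (2*π*t*h)) MeasureTheory.volume x (1/2) := by
    apply Continuous.intervalIntegrable
    apply Continuous.add continuous_const
    apply continuous_finset_sum
    intro h _
    fun_prop
  have hFTC : ∫ t in x..(1/2:ℝ), (1 + ∑ h ∈ Finset.Icc (1:ℤ) N, 2 * Real.cos (2*π*t*h))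
      = G N (1/2) - G N x :=
    intervalIntegral.integral_eq_sub_of_hasDerivAt (fun t _ => hasDerivAt_G N t) hK
  have hcong : ∫ t in x..(1/2:ℝ), (1 + ∑ h ∈ Finset.Icc (1:ℤ) N, 2 * Real.cos (2*π*t*h))
      = ∫ t in x..(1/2:ℝ), u t * v' t := by
    apply intervalIntegral.integral_congr
    intro t ht
    rw [huIcc] at ht
    dsimp only
    rw [dirichlet N (by omega) t (ne_of_gt (hsin t ht))]
    rw [hu_def, hv'_def]
    dsimp only
    rw [show c*t = (2*(N:ℝ)+1)*(π*t) from by rw [hc]; ring]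
    rw [div_eq_mul_inv, mul_comm]
  have hIBP : ∫ t in x..(1/2:ℝ), u t * v' t
      = u (1/2) * v (1/2) - u x * v x - ∫ t in x..(1/2:ℝ), u' t * v t := by
    apply intervalIntegral.integral_mul_deriv_eq_deriv_mul
    · intro t ht; exact hu t (huIcc ▸ ht)
    · intro t _; exact hv t
    · exact hIu'
    · exact hIv'
  have hvbound : ∀ t : ℝ, |v t| ≤ 1/c := by
    intro t
    rw [hv_def]
    dsimp only
    rw [abs_div, abs_of_pos hcpos, abs_neg]
    gcongr
    exact Real.abs_cos_le_one _
  have hu'neg : ∀ t ∈ Set.Icc x (1/2:ℝ), u' t ≤ 0 := by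
    intro t ht
    rw [hu'_def]
    dsimp only
    apply div_nonpos_of_nonpos_of_nonneg
    · have hcos : 0 ≤ Real.cos (π*t) := by
        apply Real.cos_nonneg_of_mem_Icc
        constructor
        · have := Real.pi_pos; nlinarith [ht.1]
        · have := Real.pi_pos; nlinarith [ht.2]
      have := Real.pi_pos
      nlinarith
    · positivity
  have hvcont : Continuous v := by rw [hv_def]; fun_prop
  have hIuv : IntervalIntegrable (fun t => u' t * v t) MeasureTheory.volume x (1/2) := by
    apply ContinuousOn.intervalIntegrable
    rw [huIcc]
    exact hcontu'.mul hvcont.continuousOn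
  have hIbd : IntervalIntegrable (fun t => -u' t * (1/c)) MeasureTheory.volume x (1/2) := by
    apply ContinuousOn.intervalIntegrable
    rw [huIcc]
    exact (hcontu'.neg).mul continuousOn_const
  have habs : |∫ t in x..(1/2:ℝ), u' t * v t| ≤ ∫ t in x..(1/2:ℝ), -u' t * (1/c) := by
    have h1 : |∫ t in x..(1/2:ℝ), u' t * v t| ≤ ∫ t in x..(1/2:ℝ), |u' t| * |v t| := by
      have := intervalIntegral.norm_integral_le_integral_norm
        (f := fun t => u' t * v t) (μ := MeasureTheory.volume) (a := x) (b := 1/2)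
        (by linarith)
      simpa [Real.norm_eq_abs, abs_mul] using this
    refine h1.trans ?_
    apply intervalIntegral.integral_mono_on (by linarith) (by
      apply ContinuousOn.intervalIntegrable
      rw [huIcc]
      exact (hcontu'.abs.mul hvcont.continuousOn.abs)) hIbd
    intro t ht
    rw [abs_of_nonpos (hu'neg t ht)]
    apply mul_le_mul le_rfl (hvbound t) (abs_nonneg _) (by linarith [hu'neg t ht])
  have hint2 : ∫ t in x..(1/2:ℝ), -u' t * (1/c) = (u x - u (1/2)) * (1/c) := by
    have : (fun t => -u' t * (1/c)) = fun t => (u' t) * (-(1/c)) := by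
      funext t; ring
    rw [this, intervalIntegral.integral_mul_const,
      intervalIntegral.integral_eq_sub_of_hasDerivAt (fun t ht => hu t (huIcc ▸ ht)) hIu']
    ring
  have hu_half : u (1/2) = 1 := by
    rw [hu_def]
    dsimp only
    rw [show π*(1/2:ℝ) = π/2 from by ring, Real.sin_pi_div_two, inv_one]
  have hsinx : 0 < Real.sin (π*x) := hsin x ⟨le_refl x, by linarith⟩
  have hux_le : u x ≤ 1/(2*x) := by
    rw [hu_def]
    dsimp only
    rw [inv_eq_one_div]
    have h2x : 2*x ≤ Real.sin (π*x) := by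
      have hh := Real.mul_le_sin (x := π*x)
        (by positivity) (by nlinarith [Real.pi_pos])
      calc 2*x = 2/π * (π*x) := by
            field_simp
        _ ≤ Real.sin (π*x) := hh
    exact one_div_le_one_div_of_le (by linarith) h2x
  have hux_ge : 1 ≤ u x := by
    rw [hu_def]
    dsimp only
    rw [one_le_inv_iff₀]
    exact ⟨hsinx, Real.sin_le_one _⟩
  have hGx : G N x = -(∫ t in x..(1/2:ℝ), u t * v' t) := by
    rw [← hcong, hFTC, G_half]
    ring
  rw [hGx, abs_neg, hIBP]
  have hb1 : |u (1/2) * v (1/2)| ≤ 1/c := by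
    rw [hu_half, one_mul]
    exact hvbound _
  have hb2 : |u x * v x| ≤ u x * (1/c) := by
    rw [abs_mul, abs_of_pos (by linarith : (0:ℝ) < u x)]
    exact mul_le_mul_of_nonneg_left (hvbound x) (by linarith)
  have hb3 : |∫ t in x..(1/2:ℝ), u' t * v t| ≤ (u x - 1) * (1/c) := by
    calc |∫ t in x..(1/2:ℝ), u' t * v t| ≤ ∫ t in x..(1/2:ℝ), -u' t * (1/c) := habs
      _ = (u x - u (1/2)) * (1/c) := hint2
      _ = (u x - 1) * (1/c) := by rw [hu_half]
  have final : |u (1/2) * v (1/2) - u x * v x - ∫ t in x..(1/2:ℝ), u' t * v t|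
      ≤ 1/c + u x * (1/c) + (u x - 1) * (1/c) := by
    calc |u (1/2) * v (1/2) - u x * v x - ∫ t in x..(1/2:ℝ), u' t * v t|
        ≤ |u (1/2) * v (1/2) - u x * v x| + |∫ t in x..(1/2:ℝ), u' t * v t| :=
          abs_sub _ _
      _ ≤ |u (1/2) * v (1/2)| + |u x * v x| + |∫ t in x..(1/2:ℝ), u' t * v t| := by
          have := abs_sub (u (1/2) * v (1/2)) (u x * v x)
          linarith
      _ ≤ 1/c + u x * (1/c) + (u x - 1) * (1/c) := by
          linarith [hb1, hb2, hb3]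
  refine final.trans ?_
  have heq : 1/c + u x * (1/c) + (u x - 1) * (1/c) = 2 * u x * (1/c) := by ring
  rw [heq]
  calc 2 * u x * (1/c) ≤ 2 * (1/(2*x)) * (1/c) := by
        gcongr
    _ = 1 / ((2*(N:ℝ)+1)*π*x) := by
        rw [hc]
        field_simp

lemma S_abs_le (N : ℤ) (hN : 1 ≤ N) {x : ℝ} (hx0 : 0 ≤ x) :
    |S N x| ≤ 2 * N * x := by
  unfold S
  calc |∑ h ∈ Finset.Icc (1:ℤ) N, Real.sin (2*π*x*h) / (π*h)|
      ≤ ∑ h ∈ Finset.Icc (1:ℤ) N, |Real.sin (2*π*x*h) / (π*h)| :=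
        Finset.abs_sum_le_sum_abs _ _
    _ ≤ ∑ _h ∈ Finset.Icc (1:ℤ) N, 2*x := by
        apply Finset.sum_le_sum
        intro h hh
        simp only [Finset.mem_Icc] at hh
        have hh1 : (1:ℝ) ≤ (h:ℝ) := by exact_mod_cast hh.1
        rw [abs_div, abs_of_pos (by positivity : (0:ℝ) < π*(h:ℝ)),
          div_le_iff₀ (by positivity)]
        calc |Real.sin (2*π*x*h)| ≤ |2*π*x*(h:ℝ)| := Real.abs_sin_le_abs
          _ = 2*π*x*(h:ℝ) := abs_of_nonneg (by positivity)
          _ = 2*x*(π*(h:ℝ)) := by ring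
    _ = 2*N*x := by
        rw [Finset.sum_const, Int.card_Icc]
        have hcard : (((N + 1 - 1).toNat : ℕ) : ℝ) = (N:ℝ) := by
          rw [show N+1-1 = N from by ring]
          exact_mod_cast congrArg Int.cast (Int.toNat_of_nonneg (by omega))
        rw [nsmul_eq_mul, hcard]
        ring

noncomputable def P (N : ℤ) (θ : ℝ) : ℝ := (θ - ⌊θ⌋ - 1/2) + S N θ

lemma S_periodic (N : ℤ) (θ : ℝ) (k : ℤ) : S N (θ + k) = S N θ := by
  unfold S
  apply Finset.sum_congr rfl
  intro h _
  congr 1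
  rw [show 2*π*(θ+(k:ℝ))*(h:ℝ) = 2*π*θ*h + (k*h : ℤ)*(2*π) from by push_cast; ring]
  exact Real.sin_add_int_mul_two_pi _ (k*h)

lemma P_periodic (N : ℤ) (θ : ℝ) (k : ℤ) : P N (θ + k) = P N θ := by
  unfold P
  rw [S_periodic, Int.floor_add_intCast]
  push_cast
  ring_nf

lemma S_odd (N : ℤ) (θ : ℝ) : S N (-θ) = -S N θ := by
  unfold S
  rw [← Finset.sum_neg_distrib]
  apply Finset.sum_congr rfl
  intro h _
  rw [show 2*π*(-θ)*(h:ℝ) = -(2*π*θ*h) from by ring, Real.sin_neg, neg_div]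

lemma G_total (N : ℤ) (hN : 1 ≤ N) (H : ℝ) (hH1 : 1 < H) (hNH : (N:ℝ) ≤ H)
    (hHN : H < (N:ℝ) + 1) {x : ℝ} (hx0 : 0 < x) (hx : x ≤ 1/2) :
    |G N x| ≤ 4 * min 1 (H*x)⁻¹ := by
  have hNR : (1:ℝ) ≤ (N:ℝ) := by exact_mod_cast hN
  rcases le_or_gt 1 (H*x) with hcase | hcase
  · have h1 := G_bound N hN hx0 hx
    have hle : 1/((2*(N:ℝ)+1)*π*x) ≤ (H*x)⁻¹ := by
      rw [inv_eq_one_div]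
      apply one_div_le_one_div_of_le (by positivity)
      have hπ : (1:ℝ) ≤ π := by linarith [Real.pi_gt_three]
      have e1 : H*x ≤ ((N:ℝ)+1)*x := mul_le_mul_of_nonneg_right hHN.le hx0.le
      have e2 : ((N:ℝ)+1)*x ≤ (2*(N:ℝ)+1)*x := by nlinarith
      have e3 : (2*(N:ℝ)+1)*x ≤ (2*(N:ℝ)+1)*π*x := by nlinarith
      linarith
    have hminr : min 1 (H*x)⁻¹ = (H*x)⁻¹ :=
      min_eq_right (by rw [inv_le_one_iff₀]; right; exact hcase)
    rw [hminr]
    have : (0:ℝ) ≤ (H*x)⁻¹ := by positivity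
    linarith [h1.trans hle]
  · have hminl : min 1 (H*x)⁻¹ = 1 := by
      apply min_eq_left
      rw [one_le_inv_iff₀]
      exact ⟨by positivity, le_of_lt hcase⟩
    rw [hminl, mul_one]
    have h1 : |G N x| ≤ |x - 1/2| + |S N x| := by
      unfold G
      exact abs_add_le _ _
    have h2 : |S N x| ≤ 2*N*x := S_abs_le N hN hx0.le
    have h3 : (N:ℝ)*x ≤ H*x := mul_le_mul_of_nonneg_right hNH hx0.le
    have h4 : |x - 1/2| ≤ 1/2 := abs_le.2 ⟨by linarith, by linarith⟩
    linarith

theorem stmt_8 :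
    ∃ K > (0:ℝ), ∀ (H θ : ℝ), 1 < H →
      ‖((θ - ⌊θ⌋ - 1/2 : ℝ) : ℂ) +
          ∑ h ∈ (Finset.Icc (-⌊H⌋) ⌊H⌋).erase 0,
            e (θ * h) / (2 * Real.pi * Complex.I * h)‖ ≤
        K * min 1 (if nint θ = 0 then 1 else (H * nint θ)⁻¹) := by
  refine ⟨4, by norm_num, fun H θ hH => ?_⟩
  set N := ⌊H⌋ with hNdef
  have hN : 1 ≤ N := by
    rw [hNdef, Int.le_floor]
    exact_mod_cast hH.le
  have hNH : (N:ℝ) ≤ H := Int.floor_le H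
  have hHN : H < (N:ℝ) + 1 := Int.lt_floor_add_one H
  rw [sum_pair N θ,
    show ((θ - ⌊θ⌋ - 1/2 : ℝ):ℂ) + ((S N θ : ℝ):ℂ) = ((P N θ : ℝ):ℂ) from by
      rw [P]; push_cast; ring,
    Complex.norm_real, Real.norm_eq_abs]
  set r := round θ with hr
  set η := θ - r with hη
  have hθeq : θ = η + r := by rw [hη]; ring
  have hP : P N θ = P N η := by
    rw [hθeq, P_periodic]
  have hnint : nint θ = |η| := rfl
  have hηle : |η| ≤ 1/2 := by
    rw [hη, hr]
    exact abs_sub_round θ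
  rcases eq_or_ne η 0 with hη0 | hη0
  · rw [hnint, hη0, abs_zero, if_pos rfl, hP, hη0]
    have hS0 : S N 0 = 0 := by
      unfold S
      apply Finset.sum_eq_zero
      intro h _
      rw [show 2*π*(0:ℝ)*(h:ℝ) = 0 from by ring, Real.sin_zero, zero_div]
    rw [P, hS0]
    norm_num
  · rw [hnint, if_neg (abs_ne_zero.2 hη0), hP]
    rcases lt_or_gt_of_ne hη0 with hneg | hpos
    · -- η < 0
      have hfl : ⌊η⌋ = -1 := by
        rw [Int.floor_eq_iff]
        have := abs_le.mp hηle
        push_cast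
        constructor <;> [linarith; linarith]
      have habs : |η| = -η := abs_of_neg hneg
      have hPG : P N η = -(G N (-η)) := by
        rw [P, G, hfl, S_odd]
        push_cast
        ring
      rw [hPG, abs_neg, habs]
      exact G_total N hN H hH hNH hHN (by linarith) (by rw [habs] at hηle; linarith)
    · -- η > 0
      have hfl : ⌊η⌋ = 0 := by
        rw [Int.floor_eq_zero_iff]
        constructor
        · exact hpos.le
        · rw [abs_of_pos hpos] at hηle; linarith
      have hPG : P N η = G N η := by
        rw [P, G, hfl]
        push_cast
        ring
      rw [hPG, abs_of_pos hpos]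
      exact G_total N hN H hH hNH hHN hpos (by rw [abs_of_pos hpos] at hηle; linarith)
end
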